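/- Define f : (0,1] → ℝ by f(μ) = 2(2 − √μ)(ln 2 − ln(2 − √μ))/√μ − 1. Then f(1) = 2 ln 2 − 1, and for every λ ∈ (0,1]: ∫_λ^1 f(μ) dμ + (2√λ − λ)(1 − f(λ)) = 2(1 − ln 2). -/

import Mathlib

open MeasureTheory Real

noncomputable def Fgs (x : ℝ) : ℝ :=
  -2 * ((2 - Real.sqrt x)^2 * (Real.log 2 - Real.log (2 - Real.sqrt x)))
    - (2 - Real.sqrt x)^2 - x

lemma Fgs_deriv {x : ℝ} (hx0 : 0 < x) (hx1 : x ≤ 1) :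
    HasDerivAt Fgs
      (2 * (2 - Real.sqrt x) * (Real.log 2 - Real.log (2 - Real.sqrt x))
        / Real.sqrt x - 1) x := by
  have hs0 : Real.sqrt x ≠ 0 := by positivity
  have hsle : Real.sqrt x ≤ 1 := Real.sqrt_le_one.mpr hx1
  have h2 : (0:ℝ) < 2 - Real.sqrt x := by linarith
  have hs : HasDerivAt Real.sqrt (1 / (2 * Real.sqrt x)) x :=
    Real.hasDerivAt_sqrt (ne_of_gt hx0)
  have h1 : HasDerivAt (fun y => 2 - Real.sqrt y) (-(1 / (2 * Real.sqrt x))) x :=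
    hs.const_sub 2
  have hlog : HasDerivAt (fun y => Real.log (2 - Real.sqrt y))
      (-(1 / (2 * Real.sqrt x)) / (2 - Real.sqrt x)) x :=
    h1.log (ne_of_gt h2)
  have hg : HasDerivAt (fun y => Real.log 2 - Real.log (2 - Real.sqrt y))
      (-(-(1 / (2 * Real.sqrt x)) / (2 - Real.sqrt x))) x :=
    hlog.const_sub (Real.log 2)
  have hsq : HasDerivAt (fun y => (2 - Real.sqrt y)^2)
      (2 * (2 - Real.sqrt x)^1 * -(1 / (2 * Real.sqrt x))) x := by
    simpa using h1.fun_pow 2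
  have hF := (((hsq.mul hg).const_mul (-2)).sub hsq).sub (hasDerivAt_id x)
  refine hF.congr_deriv ?_
  field_simp
  ring

theorem gain_splitting_closed_form_integral_equation
    (f : ℝ → ℝ)
    (hf : ∀ μ ∈ Set.Ioc (0 : ℝ) 1,
      f μ = 2 * (2 - Real.sqrt μ) * (Real.log 2 - Real.log (2 - Real.sqrt μ))
              / Real.sqrt μ - 1) :
    f 1 = 2 * Real.log 2 - 1 ∧
      ∀ l ∈ Set.Ioc (0 : ℝ) 1,
        (∫ μ in l..1, f μ) + (2 * Real.sqrt l - l) * (1 - f l)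
          = 2 * (1 - Real.log 2) := by
  have hf1 : f 1 = 2 * Real.log 2 - 1 := by
    rw [hf 1 ⟨by norm_num, le_refl 1⟩]
    norm_num
  refine ⟨hf1, ?_⟩
  intro l hl
  obtain ⟨hl0, hl1⟩ := hl
  have hderiv : ∀ x ∈ Set.uIcc l 1, HasDerivAt Fgs (f x) x := by
    intro x hx
    rw [Set.uIcc_of_le hl1] at hx
    have hx0 : 0 < x := lt_of_lt_of_le hl0 hx.1
    have := Fgs_deriv hx0 hx.2
    rwa [← hf x ⟨hx0, hx.2⟩] at this
  have hint : IntervalIntegrable f volume l 1 := by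
    apply ContinuousOn.intervalIntegrable
    rw [Set.uIcc_of_le hl1]
    have hg : ContinuousOn (fun y => 2 * (2 - Real.sqrt y) *
        (Real.log 2 - Real.log (2 - Real.sqrt y)) / Real.sqrt y - 1)
        (Set.Icc l 1) := by
      intro x hx
      have hx0 : 0 < x := lt_of_lt_of_le hl0 hx.1
      have hs0 : Real.sqrt x ≠ 0 := by positivity
      have hsle : Real.sqrt x ≤ 1 := Real.sqrt_le_one.mpr hx.2
      have h2 : (2 : ℝ) - Real.sqrt x ≠ 0 := by
        have := Real.sqrt_nonneg x; intro h; nlinarith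
      have hsc : ContinuousAt Real.sqrt x := Real.continuous_sqrt.continuousAt
      exact ((((continuousAt_const.mul (continuousAt_const.sub hsc)).mul
        (continuousAt_const.sub ((continuousAt_const.sub hsc).log h2))).div
          hsc hs0).sub continuousAt_const).continuousWithinAt
    exact hg.congr fun x hx => hf x ⟨lt_of_lt_of_le hl0 hx.1, hx.2⟩
  have hFTC := intervalIntegral.integral_eq_sub_of_hasDerivAt hderiv hint
  rw [hFTC, hf l ⟨hl0, hl1⟩]
  set s := Real.sqrt l with hs
  have hl' : s^2 = l := Real.sq_sqrt hl0.le
  have hs0 : (0:ℝ) < s := Real.sqrt_pos.mpr hl0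
  have hsle : s ≤ 1 := Real.sqrt_le_one.mpr hl1
  simp only [Fgs, Real.sqrt_one, show (2:ℝ)-1 = 1 from by norm_num, Real.log_one]
  rw [← hs, ← hl']
  field_simp
  ring
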